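/- Let S ⊆ F_2^n be a Sidon set. Then the Fourier–Hadamard transform of (−1)^{γ_S} equals the function a ↦ 2^n·Δ_0(a) − (\widehat{1_S}(a))^2 + |S|, where Δ_0(0)=1 and Δ_0(a)=0 for a ≠ 0. -/

import Mathlib

open Finset
def dotp {n : ℕ} (a x : Fin n → ZMod 2) : ZMod 2 := ∑ i, a i * x i
def chi {n : ℕ} (a x : Fin n → ZMod 2) : ℤ := (-1 : ℤ) ^ (dotp a x).val
def fourierS {n : ℕ} (S : Finset (Fin n → ZMod 2)) (u : Fin n → ZMod 2) : ℤ :=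
  ∑ x ∈ S, chi u x
def IsSidon {n : ℕ} (S : Set (Fin n → ZMod 2)) : Prop :=
  ∀ a ∈ S, ∀ b ∈ S, ∀ c ∈ S, ∀ d ∈ S,
    a ≠ b → c ≠ d → a + b = c + d → ({a, b} : Set (Fin n → ZMod 2)) = {c, d}
def IsKCover {n : ℕ} (S : Finset (Fin n → ZMod 2)) (k : ℕ) : Prop :=
  0 < k ∧ ∀ p ∉ S,
    {T : Finset (Fin n → ZMod 2) | T ⊆ S ∧ T.card = 3 ∧ ∑ x ∈ T, x = p}.ncard = k
def cayGamma {n : ℕ} (S : Set (Fin n → ZMod 2)) : SimpleGraph (Fin n → ZMod 2) where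
  Adj u v := u + v ≠ 0 ∧ ∃ x ∈ S, (u + v) + x ∈ S
  symm := ⟨by intro u v h; rwa [add_comm v u]⟩
  loopless := ⟨by
    intro u h
    apply h.1
    funext i
    exact CharTwo.add_self_eq_zero (u i)⟩

section Aux
variable {n : ℕ}

lemma addself (x : Fin n → ZMod 2) : x + x = 0 := by
  funext i; exact CharTwo.add_self_eq_zero (x i)

lemma neg_one_pow_add (v w : ZMod 2) : (-1:ℤ)^((v+w).val) = (-1:ℤ)^v.val * (-1:ℤ)^w.val := by
  revert v w; decide

lemma dotp_add_right (a x y : Fin n → ZMod 2) : dotp a (x+y) = dotp a x + dotp a y := by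
  simp [dotp, mul_add, Finset.sum_add_distrib]

lemma dotp_add_left (a b x : Fin n → ZMod 2) : dotp (a+b) x = dotp a x + dotp b x := by
  simp [dotp, add_mul, Finset.sum_add_distrib]

lemma chi_add_right (a x y : Fin n → ZMod 2) : chi a (x+y) = chi a x * chi a y := by
  unfold chi; rw [dotp_add_right]; exact neg_one_pow_add _ _

lemma chi_add_left (a b x : Fin n → ZMod 2) : chi (a+b) x = chi a x * chi b x := by
  unfold chi; rw [dotp_add_left]; exact neg_one_pow_add _ _

lemma chi_zero_right (a : Fin n → ZMod 2) : chi a 0 = 1 := by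
  simp [chi, dotp]

lemma chi_comm (a x : Fin n → ZMod 2) : chi a x = chi x a := by
  simp [chi, dotp, mul_comm]

lemma dotp_single (i : Fin n) (a : Fin n → ZMod 2) : dotp (Pi.single i 1) a = a i := by
  simp [dotp, Pi.single_apply, ite_mul]

lemma sum_chi (a : Fin n → ZMod 2) :
    ∑ u : Fin n → ZMod 2, chi u a = if a = 0 then (2:ℤ)^n else 0 := by
  split_ifs with h
  · subst h
    have : ∀ u : Fin n → ZMod 2, chi u 0 = 1 := fun u => by simp [chi, dotp]
    simp only [this, Finset.sum_const, Finset.card_univ, nsmul_eq_mul, mul_one]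
    simp
  · obtain ⟨i, hi⟩ : ∃ i, a i ≠ 0 := by
      by_contra h'; push_neg at h'; exact h (funext fun i => h' i)
    have hai : a i = 1 := by
      revert hi; generalize a i = v; revert v; decide
    have hsingle : chi (Pi.single i 1) a = -1 := by
      unfold chi; rw [dotp_single, hai]; decide
    refine Finset.sum_involution (fun u _ => u + Pi.single i 1) ?_ ?_ ?_ ?_
    · intro u _
      rw [chi_add_left, hsingle]; ring
    · intro u _ _
      intro hcon
      have := congrFun hcon i
      simp [Pi.single_apply] at this
    · intro u _; exact Finset.mem_univ _
    · intro u _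
      show u + Pi.single i 1 + Pi.single i 1 = u
      rw [add_assoc, addself, add_zero]

end Aux

section Aux2
variable {n : ℕ}

open scoped Classical in
lemma fiber_eq {S : Finset (Fin n → ZMod 2)} (hS : IsSidon (S : Set (Fin n → ZMod 2)))
    {d : Fin n → ZMod 2} (hd : d ≠ 0) {x : Fin n → ZMod 2} (hx : x ∈ S) (hdx : d + x ∈ S) :
    ((S ×ˢ S).filter (fun p => ¬ p.1 = p.2 ∧ p.1 + p.2 = d)) = {(d+x, x), (x, d+x)} := by
  have hxne : d + x ≠ x := by
    intro h
    apply hd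
    have : d + x + x = x + x := by rw [h]
    rwa [add_assoc, addself, add_zero] at this
  have hsum : (d + x) + x = d := by rw [add_assoc, addself, add_zero]
  ext p
  simp only [Finset.mem_filter, Finset.mem_product, Finset.mem_insert, Finset.mem_singleton]
  constructor
  · rintro ⟨⟨h1, h2⟩, hne, heq⟩
    have hset := hS p.1 (Finset.mem_coe.mpr h1) p.2 (Finset.mem_coe.mpr h2)
      (d+x) (Finset.mem_coe.mpr hdx) x (Finset.mem_coe.mpr hx) hne hxne (heq.trans hsum.symm)
    have hp1 : p.1 = d + x ∨ p.1 = x := by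
      have hm : p.1 ∈ ({d+x, x} : Set (Fin n → ZMod 2)) := by
        rw [← hset]; left; rfl
      simpa using hm
    have hp2 : p.2 = p.1 + d := by
      have : p.1 + (p.1 + p.2) = p.1 + d := by rw [heq]
      rwa [← add_assoc, addself, zero_add] at this
    rcases hp1 with h | h
    · left
      have : p.2 = x := by rw [hp2, h, add_comm d x, add_assoc, addself, add_zero]
      exact Prod.ext h this
    · right
      have : p.2 = d + x := by rw [hp2, h, add_comm]
      exact Prod.ext h this
  · rintro (rfl | rfl)
    · exact ⟨⟨hdx, hx⟩, hxne, hsum⟩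
    · refine ⟨⟨hx, hdx⟩, fun hc => hxne hc.symm, ?_⟩
      rw [add_comm]; exact hsum

end Aux2

section Aux3
variable {n : ℕ}

open scoped Classical in
lemma key {S : Finset (Fin n → ZMod 2)} (hS : IsSidon (S : Set (Fin n → ZMod 2)))
    (a : Fin n → ZMod 2) :
    (fourierS S a)^2 = (S.card : ℤ) +
      2 * ∑ d ∈ Finset.univ.filter (fun u : Fin n → ZMod 2 => u ≠ 0 ∧ ∃ x ∈ S, u + x ∈ S),
        chi a d := by
  have h1 : (fourierS S a)^2 = ∑ p ∈ S ×ˢ S, chi a (p.1 + p.2) := by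
    rw [sq, fourierS, Finset.sum_mul_sum]
    rw [Finset.sum_product]
    exact Finset.sum_congr rfl fun x _ => Finset.sum_congr rfl fun y _ =>
      (chi_add_right a x y).symm
  rw [h1, ← Finset.sum_filter_add_sum_filter_not (S ×ˢ S) (fun p => p.1 = p.2)]
  have hdiag : ∑ p ∈ (S ×ˢ S).filter (fun p => p.1 = p.2), chi a (p.1 + p.2) = (S.card : ℤ) := by
    have himg : ((S ×ˢ S).filter (fun p => p.1 = p.2)) = S.image (fun x => (x, x)) := by
      ext ⟨p1, p2⟩
      simp only [Finset.mem_filter, Finset.mem_product, Finset.mem_image, Prod.mk.injEq]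
      constructor
      · rintro ⟨⟨h1, h2⟩, rfl⟩; exact ⟨p1, h1, rfl, rfl⟩
      · rintro ⟨x, hx, rfl, rfl⟩; exact ⟨⟨hx, hx⟩, rfl⟩
    rw [himg, Finset.sum_image (by intro x _ y _ h; exact (Prod.mk.injEq _ _ _ _).mp h |>.1)]
    have : ∀ x ∈ S, chi a (x + x) = 1 := fun x _ => by rw [addself, chi_zero_right]
    rw [Finset.sum_congr rfl this, Finset.sum_const, nsmul_eq_mul, mul_one]
  set D := Finset.univ.filter (fun u : Fin n → ZMod 2 => u ≠ 0 ∧ ∃ x ∈ S, u + x ∈ S) with hD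
  have hoff : ∑ p ∈ (S ×ˢ S).filter (fun p => ¬ p.1 = p.2), chi a (p.1 + p.2)
      = 2 * ∑ d ∈ D, chi a d := by
    rw [← Finset.sum_fiberwise_of_maps_to (g := fun p : (Fin n → ZMod 2) × (Fin n → ZMod 2) => p.1 + p.2)
      (t := D) ?_]
    · rw [Finset.mul_sum]
      refine Finset.sum_congr rfl fun d hd => ?_
      simp only [hD, Finset.mem_filter, Finset.mem_univ, true_and] at hd
      obtain ⟨hd0, x, hx, hdx⟩ := hd
      have hfib : ((S ×ˢ S).filter (fun p => ¬ p.1 = p.2)).filter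
          (fun p => p.1 + p.2 = d) = {(d+x, x), (x, d+x)} := by
        rw [Finset.filter_filter]
        exact fiber_eq hS hd0 hx hdx
      have hxne : d + x ≠ x := by
        intro h
        apply hd0
        have : d + x + x = x + x := by rw [h]
        rwa [add_assoc, addself, add_zero] at this
      have e1 : d + x + x = d := by rw [add_assoc, addself, add_zero]
      have e2 : x + (d + x) = d := by rw [add_comm x, add_assoc, addself, add_zero]
      have hnm : (d + x, x) ∉ ({(x, d + x)} : Finset ((Fin n → ZMod 2) × (Fin n → ZMod 2))) := by
        simp only [Finset.mem_singleton, Prod.mk.injEq, not_and]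
        intro h; exact absurd h hxne
      rw [hfib, Finset.sum_insert hnm, Finset.sum_singleton]
      show chi a (d + x + x) + chi a (x + (d + x)) = 2 * chi a d
      rw [e1, e2]; ring
    · intro p hp
      simp only [Finset.mem_filter, Finset.mem_product] at hp
      simp only [hD, Finset.mem_filter, Finset.mem_univ, true_and]
      refine ⟨fun hc => hp.2 ?_, p.2, hp.1.2, ?_⟩
      · have : p.1 + (p.1 + p.2) = p.1 + 0 := by rw [hc]
        rw [← add_assoc, addself, zero_add, add_zero] at this
        exact this.symm
      · rw [add_assoc, addself, add_zero]; exact hp.1.1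
  rw [hdiag, hoff]

end Aux3

open scoped Classical in
theorem stmt17 {n : ℕ} (S : Finset (Fin n → ZMod 2))
    (hS : IsSidon (S : Set (Fin n → ZMod 2))) (a : Fin n → ZMod 2) :
    ∑ u : Fin n → ZMod 2,
        chi u a * (if u ≠ 0 ∧ ∃ x ∈ S, u + x ∈ S then (-1 : ℤ) else 1)
      = 2 ^ n * (if a = 0 then (1 : ℤ) else 0) - (fourierS S a) ^ 2 + (S.card : ℤ) := by
  have hsplit : ∀ u : Fin n → ZMod 2,
      chi u a * (if u ≠ 0 ∧ ∃ x ∈ S, u + x ∈ S then (-1:ℤ) else 1)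
        = chi u a - 2 * (if u ≠ 0 ∧ ∃ x ∈ S, u + x ∈ S then chi u a else 0) := by
    intro u; split_ifs <;> ring
  calc ∑ u : Fin n → ZMod 2, chi u a * (if u ≠ 0 ∧ ∃ x ∈ S, u + x ∈ S then (-1:ℤ) else 1)
      = ∑ u : Fin n → ZMod 2,
          (chi u a - 2 * (if u ≠ 0 ∧ ∃ x ∈ S, u + x ∈ S then chi u a else 0)) :=
        Finset.sum_congr rfl fun u _ => hsplit u
    _ = (∑ u : Fin n → ZMod 2, chi u a)
          - 2 * ∑ u ∈ Finset.univ.filter (fun u : Fin n → ZMod 2 => u ≠ 0 ∧ ∃ x ∈ S, u + x ∈ S),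
              chi u a := by
        rw [Finset.sum_sub_distrib, ← Finset.mul_sum, Finset.sum_filter]
    _ = _ := by
        rw [sum_chi]
        have h2 : ∑ u ∈ Finset.univ.filter (fun u : Fin n → ZMod 2 => u ≠ 0 ∧ ∃ x ∈ S, u + x ∈ S),
            chi u a
            = ∑ u ∈ Finset.univ.filter (fun u : Fin n → ZMod 2 => u ≠ 0 ∧ ∃ x ∈ S, u + x ∈ S),
              chi a u :=
          Finset.sum_congr rfl fun u _ => chi_comm u a
        have hk := key hS a
        split_ifs with h <;> linarith [hk, h2]
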